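/- arXiv:1509.07383 — 6 statements merged into one kernel-verified Lean document; each statement's English description precedes it below -/
import Mathlib

section
/- For the Markov chain (N_n) on the positive integers with transition probabilities p(i,j) = (i+j-1 choose i)·m^(i+1)/(m+1)^(i+j), started at 1, the first return time γ := inf{n ≥ 1 : N_n = 1} has an exponential moment: there exists r > 0 such that E[exp(r·γ)] < ∞. -/
open MeasureTheory
open scoped ENNReal Classical

/-- The transition probabilities `p(i,j) = (i+j-1 choose i) * m^(i+1)/(m+1)^(i+j)` of the
local-time Markov chain of the `m`-biased random walk. -/
noncomputable def ptrans (m : ℝ) (i j : ℕ) : ℝ :=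
  ((i + j - 1).choose i : ℝ) * m ^ (i + 1) / (m + 1) ^ (i + j)

/-- The first return time to state `1` of a trajectory `ω` (junk value if there is
no return, so it must always be used together with the event `∃ n ≥ 1, ω n = 1`). -/
noncomputable def retTime (ω : ℕ → ℕ) : ℕ :=
  sInf {n : ℕ | 1 ≤ n ∧ ω n = 1}

/-- `μ` is (the law of) the Markov chain with transition probabilities `p(i,j)`
started at `1`, expressed through its finite-dimensional (cylinder) distributions. -/
def IsLocalTimeChain (m : ℝ) (μ : Measure (ℕ → ℕ)) : Prop :=
  ∀ (n : ℕ) (x : ℕ → ℕ),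
    μ {ω | ∀ k ≤ n, ω k = x k} =
      (if x 0 = 1 then 1 else 0) *
        ∏ k ∈ Finset.range n, ENNReal.ofReal (ptrans m (x k) (x (k + 1)))

/-- threshold -/
noncomputable def Kc (m : ℝ) : ℕ := ⌈(12 * m) / (m - 1)⌉₊

/-- small parameter -/
noncomputable def εc (m : ℝ) : ℝ :=
  min ((m - 1) / 2) (min (1 / (2 * (Kc m : ℝ))) ((m / (m + 1)) ^ (Kc m) / 20))

noncomputable def zc (m : ℝ) : ℝ := 1 + εc m
noncomputable def ρc (m : ℝ) : ℝ := 1 - (εc m) ^ 2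

section numeric

variable {m : ℝ}

lemma Kc_ge (hm : 1 < m) : 12 * m / (m - 1) ≤ (Kc m : ℝ) := Nat.le_ceil _

lemma Kc_ge12 (hm : 1 < m) : (12 : ℝ) ≤ (Kc m : ℝ) := by
  refine le_trans ?_ (Kc_ge hm)
  rw [le_div_iff₀ (by linarith)]
  nlinarith

lemma eps_pos (hm : 1 < m) : 0 < εc m := by
  have h1 : (0:ℝ) < (Kc m : ℝ) := lt_of_lt_of_le (by norm_num) (Kc_ge12 hm)
  have hp : (0:ℝ) < m / (m + 1) := by positivity
  refine lt_min (by linarith) (lt_min (by positivity) (by positivity))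

lemma eps_le1 : εc m ≤ (m - 1) / 2 := min_le_left _ _

lemma eps_le2 : εc m ≤ 1 / (2 * (Kc m : ℝ)) :=
  le_trans (min_le_right _ _) (min_le_left _ _)

lemma eps_le3 : 20 * εc m ≤ (m / (m + 1)) ^ (Kc m) := by
  have h := le_trans (min_le_right ((m - 1) / 2) _) (min_le_right (1 / (2 * (Kc m : ℝ)))
    ((m / (m + 1)) ^ (Kc m) / 20))
  have : εc m ≤ (m / (m + 1)) ^ (Kc m) / 20 := h
  linarith

lemma eps_small (hm : 1 < m) : εc m ≤ 1 / 24 := by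
  have h12 := Kc_ge12 hm
  have h2 : εc m ≤ 1 / (2 * (Kc m : ℝ)) := eps_le2
  have h : 1 / (2 * (Kc m : ℝ)) ≤ 1 / 24 := by
    apply div_le_div_of_nonneg_left (by norm_num) (by norm_num) (by linarith)
  linarith

lemma Keps (hm : 1 < m) : (Kc m : ℝ) * εc m ≤ 1 / 2 := by
  have h12 := Kc_ge12 hm
  have h2 : εc m ≤ 1 / (2 * (Kc m : ℝ)) := eps_le2
  have hK0 : (0:ℝ) < (Kc m : ℝ) := by linarith
  calc (Kc m : ℝ) * εc m ≤ (Kc m : ℝ) * (1 / (2 * (Kc m : ℝ))) := by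
        exact mul_le_mul_of_nonneg_left h2 hK0.le
    _ = 1 / 2 := by field_simp
end numeric

section drift

set_option maxHeartbeats 1000000 in
/-- The core real drift inequality, abstract version. -/
lemma drift_core (m ε : ℝ) (K : ℕ) (hm : 1 < m) (hε0 : 0 < ε)
    (hε1 : ε ≤ (m - 1) / 2) (hεs : ε ≤ 1 / 24)
    (hK12 : (12:ℝ) ≤ (K:ℝ)) (hKR : 12 * m / (m - 1) ≤ (K:ℝ))
    (hKeps : (K:ℝ) * ε ≤ 1 / 2)
    (hε3 : 20 * ε ≤ (m / (m + 1)) ^ K)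
    (i : ℕ) (hi : 1 ≤ i) :
    (1 + ε) * (m / (m - ε)) ^ (i + 1) ≤
      (1 - ε ^ 2) * (1 + ε) ^ i + (m / (m + 1)) ^ (i + 1) * (1 + ε) := by
  have hm0 : (0:ℝ) < m := by linarith
  obtain ⟨z, hz⟩ : ∃ z : ℝ, z = 1 + ε := ⟨_, rfl⟩
  obtain ⟨g, hg⟩ : ∃ g : ℝ, g = m / (m - ε) := ⟨_, rfl⟩
  obtain ⟨ρ, hρ⟩ : ∃ ρ : ℝ, ρ = 1 - ε ^ 2 := ⟨_, rfl⟩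
  obtain ⟨p, hpdef⟩ : ∃ p : ℝ, p = m / (m + 1) := ⟨_, rfl⟩
  rw [← hz, ← hg, ← hρ, ← hpdef]
  rw [← hpdef] at hε3
  have hε2 : ε ≤ 1 / (2 * (K:ℝ)) := by
    rw [le_div_iff₀ (by linarith)]; linarith [hKeps]
  have hme : (m + 1) / 2 ≤ m - ε := by linarith
  have hme0 : 0 < m - ε := by linarith
  have hg0 : 0 < g := by rw [hg]; positivity
  have hg1 : 1 ≤ g := by rw [hg, le_div_iff₀ hme0]; linarith
  have hz1 : 1 ≤ z := by rw [hz]; linarith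
  have hz0 : 0 < z := by linarith
  have hgz : g ≤ z := by
    rw [hg, div_le_iff₀ hme0, hz]; nlinarith
  have hzg2 : z * g ≤ 1 + 2 * ε := by
    rw [hz, hg, ← mul_div_assoc, div_le_iff₀ hme0]; nlinarith
  have hρ0 : 0 < ρ := by rw [hρ]; nlinarith
  have hρ1 : ρ ≤ 1 := by rw [hρ]; nlinarith
  have hp0 : 0 < p := by rw [hpdef]; positivity
  have hp1 : p ≤ 1 := by rw [hpdef, div_le_one (by linarith)]; linarith
  have hphalf : 1 / 2 ≤ p := by rw [hpdef, le_div_iff₀ (by linarith)]; linarith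
  rcases le_or_gt (K : ℕ) i with hiK | hiK
  · -- large i : z * g^(i+1) ≤ ρ * z^i
    obtain ⟨d, hddef⟩ : ∃ d : ℝ, d = ε * (m - 1) / (2 * m) := ⟨_, rfl⟩
    have hd0 : 0 ≤ d := by
      rw [hddef]; apply div_nonneg (by nlinarith) (by linarith)
    have hd2 : d ≤ ε / 2 := by
      rw [hddef, div_le_div_iff₀ (by linarith) (by norm_num)]; nlinarith
    have h1 : 1 + d ≤ z / g := by
      have hzg : z / g = z * (m - ε) / m := by
        rw [hg]; field_simp
      rw [hzg, le_div_iff₀ hm0, hz, hddef]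
      have he : (1 + ε * (m - 1) / (2 * m)) * m = m + ε * (m - 1) / 2 := by
        field_simp
      rw [he]; nlinarith
    have hKd6 : 6 * ε ≤ (K:ℝ) * d := by
      have h' : 12 * m ≤ (K:ℝ) * (m - 1) := by
        rw [div_le_iff₀ (by linarith)] at hKR; linarith
      rw [hddef,
        show (K:ℝ) * (ε * (m - 1) / (2 * m)) = ((K:ℝ) * (m - 1)) * ε / (2 * m) from by ring,
        le_div_iff₀ (by linarith)]
      nlinarith
    have hKd4 : (K:ℝ) * d ≤ 1 / 4 := by
      calc (K:ℝ) * d ≤ (K:ℝ) * (ε / 2) := by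
            exact mul_le_mul_of_nonneg_left hd2 (by linarith)
        _ ≤ 1 / 4 := by linarith
    have h3 : z * g ≤ ρ * (1 + (K:ℝ) * d) := by
      rw [hρ]
      have hε2' : ε ^ 2 ≤ ε := by nlinarith
      have hKdε : (K:ℝ) * d * ε ^ 2 ≤ ε := by nlinarith
      nlinarith
    have h2 : 1 + (K:ℝ) * d ≤ (1 + d) ^ K := one_add_mul_le_pow (by linarith) K
    have h4 : (1 + d) ^ K ≤ (z / g) ^ K := pow_le_pow_left₀ (by linarith) h1 K
    have hcore : z * g * g ^ K ≤ ρ * z ^ K := by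
      have hc : z * g ≤ ρ * (z / g) ^ K := by
        calc z * g ≤ ρ * (1 + (K:ℝ) * d) := h3
          _ ≤ ρ * (z / g) ^ K := by
              exact mul_le_mul_of_nonneg_left (h2.trans h4) hρ0.le
      calc z * g * g ^ K ≤ ρ * (z / g) ^ K * g ^ K := by
            exact mul_le_mul_of_nonneg_right hc (by positivity)
        _ = ρ * z ^ K := by
            rw [div_pow, mul_assoc, div_mul_cancel₀]
            positivity
    obtain ⟨t, rfl⟩ : ∃ t, i = K + t := ⟨i - K, by omega⟩
    have hgt : g ^ t ≤ z ^ t := pow_le_pow_left₀ hg0.le hgz t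
    have hmain : z * g ^ (K + t + 1) ≤ ρ * z ^ (K + t) := by
      have he : z * g ^ (K + t + 1) = (z * g * g ^ K) * g ^ t := by ring
      rw [he, pow_add]
      calc (z * g * g ^ K) * g ^ t ≤ (ρ * z ^ K) * z ^ t := by
            apply mul_le_mul hcore hgt (by positivity) (by positivity)
        _ = ρ * (z ^ K * z ^ t) := by ring
    have hnn : 0 ≤ p ^ (K + t + 1) * z := by positivity
    linarith
  · -- small i
    have h5 : z * g ^ (i + 1) ≤ z ^ i * (z * g) := by
      have hgi : g ^ i ≤ z ^ i := pow_le_pow_left₀ hg0.le hgz i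
      calc z * g ^ (i + 1) = z * g ^ i * g := by ring
        _ ≤ z * z ^ i * g := by
              exact mul_le_mul_of_nonneg_right (mul_le_mul_of_nonneg_left hgi hz0.le) hg0.le
        _ = z ^ i * (z * g) := by ring
    have h6 : z ^ i ≤ 2 := by
      have e1 : z ^ i ≤ z ^ K := pow_le_pow_right₀ hz1 hiK.le
      have e2 : z ^ K ≤ Real.exp ε ^ K := by
        apply pow_le_pow_left₀ hz0.le
        rw [hz]; linarith [Real.add_one_le_exp ε]
      have e3 : Real.exp ε ^ K = Real.exp ((K:ℝ) * ε) := (Real.exp_nat_mul ε K).symm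
      have e4 : Real.exp ((K:ℝ) * ε) ≤ Real.exp (1/2) := Real.exp_le_exp.mpr hKeps
      have e5 : Real.exp (1/2 : ℝ) ≤ 2 := by
        have h : (1/2 : ℝ) ≤ Real.log 2 := by
          linarith [Real.log_two_gt_d9]
        calc Real.exp (1/2 : ℝ) ≤ Real.exp (Real.log 2) := Real.exp_le_exp.mpr h
          _ = 2 := Real.exp_log (by norm_num)
      calc z ^ i ≤ z ^ K := e1
        _ ≤ Real.exp ε ^ K := e2
        _ ≤ 2 := by rw [e3]; exact e4.trans e5
    have h7 : z * g - ρ ≤ 3 * ε := by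
      rw [hρ]; nlinarith
    have h7' : 0 ≤ z * g - ρ := by nlinarith
    have h8 : 10 * ε ≤ p ^ (K + 1) := by
      have he : p ^ (K + 1) = p ^ K * p := by ring
      have := mul_le_mul hε3 hphalf (by norm_num) (pow_nonneg hp0.le K)
      rw [he]; nlinarith
    have h9 : p ^ (K + 1) ≤ p ^ (i + 1) := by
      apply pow_le_pow_of_le_one hp0.le hp1; omega
    have hzi0 : (0:ℝ) < z ^ i := by positivity
    calc z * g ^ (i + 1) ≤ z ^ i * (z * g) := h5
      _ = ρ * z ^ i + z ^ i * (z * g - ρ) := by ring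
      _ ≤ ρ * z ^ i + 2 * (3 * ε) := by nlinarith
      _ ≤ ρ * z ^ i + p ^ (i + 1) * 1 := by nlinarith
      _ ≤ ρ * z ^ i + p ^ (i + 1) * z := by nlinarith [pow_pos hp0 (i+1)]

/-- The core real drift inequality. -/
lemma drift_real {m : ℝ} (hm : 1 < m) (i : ℕ) (hi : 1 ≤ i) :
    zc m * (m / (m + 1 - zc m)) ^ (i + 1) ≤
      ρc m * zc m ^ i + (m / (m + 1)) ^ (i + 1) * zc m := by
  have h := drift_core m (εc m) (Kc m) hm (eps_pos hm) eps_le1 (eps_small hm)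
    (Kc_ge12 hm) (Kc_ge hm) (Keps hm) eps_le3 i hi
  have hden : m + 1 - zc m = m - εc m := by rw [zc]; ring
  rw [show m + 1 - zc m = m - εc m from hden, zc, ρc]
  exact h
end drift

section tsumdrift

variable {m : ℝ}

lemma ptrans_nonneg (hm : 1 < m) (i j : ℕ) : 0 ≤ ptrans m i j := by
  unfold ptrans
  have h1 : (0:ℝ) < m := by linarith
  positivity

lemma ptrans_zero (i : ℕ) (hi : 1 ≤ i) : ptrans m i 0 = 0 := by
  unfold ptrans
  rw [Nat.choose_eq_zero_of_lt (by omega)]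
  simp

lemma ptrans_one (hm : 1 < m) (i : ℕ) : ptrans m i 1 = (m / (m + 1)) ^ (i + 1) := by
  unfold ptrans
  rw [show i + 1 - 1 = i from by omega, Nat.choose_self, div_pow]
  simp

lemma ptrans_succ (hm : 1 < m) (i j : ℕ) {z : ℝ} (hz0 : 0 < z) :
    ptrans m i (j + 1) * z ^ (j + 1) =
      (z * m ^ (i + 1) / (m + 1) ^ (i + 1)) * (((j + i).choose i : ℝ) * (z / (m + 1)) ^ j) := by
  unfold ptrans
  have hm1 : (0:ℝ) < m + 1 := by linarith
  rw [show i + (j + 1) - 1 = j + i from by omega, show i + (j + 1) = (i + 1) + j from by omega]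
  rw [div_pow, pow_add, pow_succ z j]
  field_simp
  ring

lemma summable_ptrans (hm : 1 < m) (i : ℕ) {z : ℝ} (hz0 : 0 < z) (hz : z < m + 1) :
    Summable (fun j => ptrans m i j * z ^ j) := by
  rw [← summable_nat_add_iff 1]
  have hr : ‖z / (m + 1)‖ < 1 := by
    rw [Real.norm_eq_abs, abs_of_pos (by positivity), div_lt_one (by linarith)]
    exact hz
  have h := (summable_choose_mul_geometric_of_norm_lt_one i hr).mul_left
    (z * m ^ (i + 1) / (m + 1) ^ (i + 1))
  refine h.congr fun j => ?_
  rw [← ptrans_succ hm i j hz0]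

lemma tsum_ptrans (hm : 1 < m) (i : ℕ) (hi : 1 ≤ i) {z : ℝ} (hz0 : 0 < z) (hz : z < m + 1) :
    ∑' j, ptrans m i j * z ^ j = z * (m / (m + 1 - z)) ^ (i + 1) := by
  have hm1 : (0:ℝ) < m + 1 := by linarith
  have hm1z : (0:ℝ) < m + 1 - z := by linarith
  have hr : ‖z / (m + 1)‖ < 1 := by
    rw [Real.norm_eq_abs, abs_of_pos (by positivity), div_lt_one (by linarith)]
    exact hz
  rw [Summable.tsum_eq_zero_add (summable_ptrans hm i hz0 hz)]
  have h0 : ptrans m i 0 * z ^ 0 = 0 := by rw [ptrans_zero i hi]; ring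
  rw [h0, zero_add]
  have hcong : ∀ j : ℕ, ptrans m i (j + 1) * z ^ (j + 1) =
      (z * m ^ (i + 1) / (m + 1) ^ (i + 1)) * (((j + i).choose i : ℝ) * (z / (m + 1)) ^ j) :=
    fun j => ptrans_succ hm i j hz0
  rw [tsum_congr hcong, tsum_mul_left, tsum_choose_mul_geometric_of_norm_lt_one i hr]
  have h1 : (1 : ℝ) - z / (m + 1) = (m + 1 - z) / (m + 1) := by field_simp
  rw [h1, div_pow, one_div, inv_div, div_pow]
  field_simp

lemma drift_subtype (hm : 1 < m) (i : ℕ) (hi : 1 ≤ i) :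
    ∑' j : {j : ℕ // j ≠ 1}, ptrans m i j * zc m ^ (j : ℕ) ≤ ρc m * zc m ^ i := by
  have hε0 := eps_pos hm
  have hε1 := eps_le1 (m := m)
  have hz0 : 0 < zc m := by rw [zc]; linarith
  have hz : zc m < m + 1 := by rw [zc]; linarith
  set f : ℕ → ℝ := fun j => ptrans m i j * zc m ^ j with hf
  have hsum : Summable f := summable_ptrans hm i hz0 hz
  have h1 : ∑' j, f j = f 1 + ∑' j, (if j = 1 then 0 else f j) := Summable.tsum_eq_add_tsum_ite hsum 1
  have h2 : ∑' j : {j : ℕ // j ≠ 1}, f j = ∑' j, (if j = 1 then 0 else f j) := by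
    have h2' : ∑' j : {j : ℕ // j ≠ 1}, f j = ∑' x : ↥{j : ℕ | j ≠ 1}, f x := rfl
    rw [h2', tsum_subtype {j : ℕ | j ≠ 1} f]
    refine tsum_congr fun j => ?_
    by_cases h : j = 1 <;> simp [Set.indicator, h]
  have h3 : ∑' j : {j : ℕ // j ≠ 1}, f j = ∑' j, f j - f 1 := by
    rw [h2]; linarith [h1]
  have h4 : f 1 = (m / (m + 1)) ^ (i + 1) * zc m := by
    rw [hf]; simp only [pow_one]; rw [ptrans_one hm i]
  rw [h3, tsum_ptrans hm i hi hz0 hz, h4]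
  linarith [drift_real hm i hi]

lemma drift_ennreal (hm : 1 < m) (i : ℕ) (hi : 1 ≤ i) :
    ∑' j : {j : ℕ // j ≠ 1},
        ENNReal.ofReal (ptrans m i (j : ℕ)) * ENNReal.ofReal (zc m) ^ (j : ℕ)
      ≤ ENNReal.ofReal (ρc m) * ENNReal.ofReal (zc m) ^ i := by
  have hε0 := eps_pos hm
  have hε1 := eps_le1 (m := m)
  have hz0 : 0 < zc m := by rw [zc]; linarith
  have hz : zc m < m + 1 := by rw [zc]; linarith
  have hcong : ∀ j : {j : ℕ // j ≠ 1},
      ENNReal.ofReal (ptrans m i (j : ℕ)) * ENNReal.ofReal (zc m) ^ (j : ℕ)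
        = ENNReal.ofReal (ptrans m i (j : ℕ) * zc m ^ (j : ℕ)) := by
    intro j
    rw [ENNReal.ofReal_mul (ptrans_nonneg hm i _), ENNReal.ofReal_pow hz0.le]
  rw [tsum_congr hcong]
  have hsum : Summable ((fun j => ptrans m i j * zc m ^ j) ∘ ((↑) : {j : ℕ // j ≠ 1} → ℕ)) :=
    (summable_ptrans hm i hz0 hz).subtype _
  rw [← ENNReal.ofReal_tsum_of_nonneg (fun j => mul_nonneg (ptrans_nonneg hm i _)
    (pow_nonneg hz0.le _)) hsum]
  calc ENNReal.ofReal (∑' j : {j : ℕ // j ≠ 1}, ptrans m i (j:ℕ) * zc m ^ (j:ℕ))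
      ≤ ENNReal.ofReal (ρc m * zc m ^ i) :=
        ENNReal.ofReal_le_ofReal (drift_subtype hm i hi)
    _ = ENNReal.ofReal (ρc m) * ENNReal.ofReal (zc m) ^ i := by
        rw [ENNReal.ofReal_mul (by rw [ρc]; nlinarith [eps_small hm]),
          ENNReal.ofReal_pow hz0.le]

end tsumdrift

section paths

/-- states different from 1 -/
abbrev SS := {j : ℕ // j ≠ 1}

/-- extension of a tuple avoiding 1 to a full trajectory starting at 1 -/
noncomputable def pathOf (n : ℕ) (v : Fin n → SS) : ℕ → ℕ :=
  fun k => if h : 1 ≤ k ∧ k ≤ n then (v ⟨k - 1, by omega⟩ : ℕ) else 1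

/-- weight of a path -/
noncomputable def Wgt (m : ℝ) (n : ℕ) (v : Fin n → SS) : ℝ≥0∞ :=
  ∏ k ∈ Finset.range n, ENNReal.ofReal (ptrans m (pathOf n v k) (pathOf n v (k + 1)))

variable {m : ℝ}

lemma pathOf_zero (n : ℕ) (v : Fin n → SS) : pathOf n v 0 = 1 := by
  unfold pathOf; rw [dif_neg (by omega)]

lemma pathOf_pos {n k : ℕ} (v : Fin n → SS) (h1 : 1 ≤ k) (h2 : k ≤ n) :
    pathOf n v k = v ⟨k - 1, by omega⟩ := by
  unfold pathOf; rw [dif_pos ⟨h1, h2⟩]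

lemma pathOf_snoc_le (n : ℕ) (v : Fin n → SS) (j : SS) {k : ℕ} (hk : k ≤ n) :
    pathOf (n + 1) (Fin.snoc v j) k = pathOf n v k := by
  rcases Nat.eq_zero_or_pos k with rfl | hk1
  · rw [pathOf_zero, pathOf_zero]
  · rw [pathOf_pos _ hk1 (by omega), pathOf_pos _ hk1 hk]
    have he : (⟨k - 1, by omega⟩ : Fin (n + 1)) =
        Fin.castSucc ⟨k - 1, by omega⟩ := rfl
    rw [he, Fin.snoc_castSucc]

lemma pathOf_snoc_last (n : ℕ) (v : Fin n → SS) (j : SS) :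
    pathOf (n + 1) (Fin.snoc v j) (n + 1) = j := by
  rw [pathOf_pos _ (by omega) (le_refl _)]
  have he : (⟨n + 1 - 1, by omega⟩ : Fin (n + 1)) = Fin.last n := by
    apply Fin.ext; simp
  rw [he, Fin.snoc_last]

lemma Wgt_snoc (n : ℕ) (v : Fin n → SS) (j : SS) :
    Wgt m (n + 1) (Fin.snoc v j) =
      Wgt m n v * ENNReal.ofReal (ptrans m (pathOf n v n) j) := by
  unfold Wgt
  rw [Finset.prod_range_succ]
  congr 1
  · refine Finset.prod_congr rfl fun k hk => ?_
    rw [Finset.mem_range] at hk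
    rw [pathOf_snoc_le n v j (by omega), pathOf_snoc_le n v j (by omega)]
  · rw [pathOf_snoc_le n v j (le_refl n), pathOf_snoc_last n v j]

lemma Wgt_eq_zero (hm : 1 < m) {n : ℕ} (v : Fin n → SS) (i0 : Fin n)
    (h0 : (v i0 : ℕ) = 0) : Wgt m n v = 0 := by
  have hmem : ((i0 : ℕ) + 1) ∈ {k : ℕ | pathOf n v k = 0} := by
    have : pathOf n v ((i0 : ℕ) + 1) = v ⟨(i0 : ℕ) + 1 - 1, by omega⟩ :=
      pathOf_pos v (by omega) (by omega)
    simp only [Set.mem_setOf_eq, this]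
    have he : (⟨(i0 : ℕ) + 1 - 1, by omega⟩ : Fin n) = i0 := by
      apply Fin.ext; simp
    rw [he, h0]
  set t := sInf {k : ℕ | pathOf n v k = 0} with hts
  have ht : pathOf n v t = 0 := Nat.sInf_mem ⟨_, hmem⟩
  have ht1 : 1 ≤ t := by
    by_contra h
    have : t = 0 := by omega
    rw [this, pathOf_zero] at ht
    omega
  have htn : t ≤ n := by
    by_contra h
    have : pathOf n v t = 1 := by unfold pathOf; rw [dif_neg (by omega)]
    omega
  have hprev : pathOf n v (t - 1) ≠ 0 := fun hc =>
    Nat.notMem_of_lt_sInf (show t - 1 < t by omega) hc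
  apply Finset.prod_eq_zero (i := t - 1) (Finset.mem_range.mpr (by omega))
  rw [show t - 1 + 1 = t from by omega, ht, ptrans_zero _ (by omega)]
  simp

/-- The master path-sum bound. -/
lemma master (hm : 1 < m) (n : ℕ) :
    ∑' v : Fin n → SS, Wgt m n v * (ENNReal.ofReal (zc m)) ^ (pathOf n v n) ≤
      (ENNReal.ofReal (ρc m)) ^ n * ENNReal.ofReal (zc m) := by
  induction n with
  | zero =>
      have h : ∑' v : Fin 0 → SS, Wgt m 0 v * (ENNReal.ofReal (zc m)) ^ (pathOf 0 v 0) =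
          Wgt m 0 default * (ENNReal.ofReal (zc m)) ^ (pathOf 0 default 0) := by
        exact tsum_eq_single default fun b' hb' => absurd (Subsingleton.elim b' default) hb'
      rw [h, pathOf_zero]
      unfold Wgt
      simp
  | succ n ih =>
      set Z := ENNReal.ofReal (zc m) with hZ
      set R := ENNReal.ofReal (ρc m) with hR
      set F : (Fin (n + 1) → SS) → ℝ≥0∞ :=
        fun w => Wgt m (n + 1) w * Z ^ (pathOf (n + 1) w (n + 1)) with hF
      have he : ∑' w : Fin (n + 1) → SS, F w =
          ∑' x : SS × (Fin n → SS), F (Fin.snoc x.2 x.1) := by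
        rw [← Equiv.tsum_eq (Fin.snocEquiv fun _ => SS) F]
        rfl
      rw [he, ENNReal.tsum_prod (f := fun j v => F (Fin.snoc v j)),
        ENNReal.tsum_comm (f := fun j v => F (Fin.snoc v j))]
      have hstep : ∀ v : Fin n → SS,
          ∑' j : SS, F (Fin.snoc v j) ≤ R * (Wgt m n v * Z ^ (pathOf n v n)) := by
        intro v
        have hcong : ∀ j : SS, F (Fin.snoc v j) =
            Wgt m n v * (ENNReal.ofReal (ptrans m (pathOf n v n) j) * Z ^ (j : ℕ)) := by
          intro j
          rw [hF]
          simp only []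
          rw [Wgt_snoc n v j, pathOf_snoc_last n v j, mul_assoc]
        rw [tsum_congr hcong, ENNReal.tsum_mul_left]
        by_cases hz : ∃ i0 : Fin n, (v i0 : ℕ) = 0
        · obtain ⟨i0, hi0⟩ := hz
          rw [Wgt_eq_zero hm v i0 hi0]
          simp
        · push_neg at hz
          have hpos : 1 ≤ pathOf n v n := by
            rcases Nat.eq_zero_or_pos n with rfl | hn
            · rw [pathOf_zero]
            · rw [pathOf_pos v hn (le_refl n)]
              have h1 := (v ⟨n - 1, by omega⟩).2
              have h2 := hz ⟨n - 1, by omega⟩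
              omega
          have hd := drift_ennreal hm (pathOf n v n) hpos
          calc Wgt m n v * ∑' j : SS, ENNReal.ofReal (ptrans m (pathOf n v n) j) * Z ^ (j : ℕ)
              ≤ Wgt m n v * (R * Z ^ (pathOf n v n)) := mul_le_mul_right hd _
            _ = R * (Wgt m n v * Z ^ (pathOf n v n)) := by ring
      calc ∑' v : Fin n → SS, ∑' j : SS, F (Fin.snoc v j)
          ≤ ∑' v : Fin n → SS, R * (Wgt m n v * Z ^ (pathOf n v n)) :=
            ENNReal.tsum_le_tsum hstep
        _ = R * ∑' v : Fin n → SS, Wgt m n v * Z ^ (pathOf n v n) := ENNReal.tsum_mul_left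
        _ ≤ R * (R ^ n * Z) := mul_le_mul_right ih _
        _ = R ^ (n + 1) * Z := by ring

end paths

section measureA

variable {m : ℝ}

/-- the event of starting at 1 and avoiding 1 during steps `1..n` -/
def Acyl (n : ℕ) : Set (ℕ → ℕ) := {ω | ω 0 = 1 ∧ ∀ k, 1 ≤ k → k ≤ n → ω k ≠ 1}

lemma cyl_measurable (n : ℕ) (x : ℕ → ℕ) :
    MeasurableSet {ω : ℕ → ℕ | ∀ k ≤ n, ω k = x k} := by
  have h : {ω : ℕ → ℕ | ∀ k ≤ n, ω k = x k} =
      ⋂ (k : ℕ) (_ : k ≤ n), (fun ω : ℕ → ℕ => ω k) ⁻¹' {x k} := by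
    ext ω; simp
  rw [h]
  exact MeasurableSet.iInter fun k => MeasurableSet.iInter fun _ =>
    (measurable_pi_apply k) (measurableSet_singleton _)

lemma Acyl_eq_iUnion (n : ℕ) :
    Acyl n = ⋃ v : Fin n → SS, {ω : ℕ → ℕ | ∀ k ≤ n, ω k = pathOf n v k} := by
  ext ω
  constructor
  · rintro ⟨h0, h1⟩
    refine Set.mem_iUnion.mpr ⟨fun i => ⟨ω ((i : ℕ) + 1), h1 _ (by omega) (by omega)⟩, ?_⟩
    intro k hk
    rcases Nat.eq_zero_or_pos k with rfl | hk1
    · rw [pathOf_zero]; exact h0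
    · rw [pathOf_pos _ hk1 hk]
      simp only []
      congr 1
      omega
  · intro h
    obtain ⟨v, hv⟩ := Set.mem_iUnion.mp h
    constructor
    · have := hv 0 (by omega)
      rwa [pathOf_zero] at this
    · intro k hk1 hkn
      rw [hv k hkn, pathOf_pos _ hk1 hkn]
      exact (v ⟨k - 1, by omega⟩).2

lemma measure_Acyl {μ : Measure (ℕ → ℕ)} (hμ : IsLocalTimeChain m μ) (n : ℕ) :
    μ (Acyl n) = ∑' v : Fin n → SS, Wgt m n v := by
  rw [Acyl_eq_iUnion n]
  rw [measure_iUnion ?_ fun v => cyl_measurable n (pathOf n v)]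
  · refine tsum_congr fun v => ?_
    rw [hμ n (pathOf n v), pathOf_zero, if_pos rfl, one_mul]
    rfl
  · intro v w hvw
    rw [Function.onFun]
    rw [Set.disjoint_left]
    intro ω hv hw
    apply hvw
    funext i
    apply Subtype.ext
    have h1 := hv ((i : ℕ) + 1) (by omega)
    have h2 := hw ((i : ℕ) + 1) (by omega)
    rw [pathOf_pos _ (by omega) (by omega)] at h1 h2
    have he : ∀ u : Fin n → SS, u ⟨(i : ℕ) + 1 - 1, by omega⟩ = u i := by
      intro u; congr 1; try (apply Fin.ext; simp)
    rw [he v] at h1; rw [he w] at h2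
    rw [← h1, ← h2]

lemma measure_Acyl_le (hm : 1 < m) {μ : Measure (ℕ → ℕ)} (hμ : IsLocalTimeChain m μ)
    (n : ℕ) : μ (Acyl n) ≤ (ENNReal.ofReal (ρc m)) ^ n := by
  have hε0 := eps_pos hm
  set Z := ENNReal.ofReal (zc m) with hZ
  set R := ENNReal.ofReal (ρc m) with hR
  have hz1 : (1:ℝ) ≤ zc m := by rw [zc]; linarith
  have hZ1 : 1 ≤ Z := by
    rw [hZ, ← ENNReal.ofReal_one]
    exact ENNReal.ofReal_le_ofReal hz1
  have hZ0 : Z ≠ 0 := by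
    rw [hZ]; simp only [ne_eq, ENNReal.ofReal_eq_zero, not_le]; linarith
  have hZtop : Z ≠ ⊤ := ENNReal.ofReal_ne_top
  have key : Z * μ (Acyl n) ≤ Z * R ^ n := by
    rw [measure_Acyl hμ n, ← ENNReal.tsum_mul_left]
    have h1 : ∀ v : Fin n → SS, Z * Wgt m n v ≤ Wgt m n v * Z ^ (pathOf n v n) := by
      intro v
      by_cases hz : ∃ i0 : Fin n, (v i0 : ℕ) = 0
      · obtain ⟨i0, hi0⟩ := hz
        rw [Wgt_eq_zero hm v i0 hi0]
        simp
      · push_neg at hz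
        have hpos : 1 ≤ pathOf n v n := by
          rcases Nat.eq_zero_or_pos n with rfl | hn
          · rw [pathOf_zero]
          · rw [pathOf_pos v hn (le_refl n)]
            have h1 := (v ⟨n - 1, by omega⟩).2
            have h2 := hz ⟨n - 1, by omega⟩
            omega
        calc Z * Wgt m n v = Wgt m n v * Z ^ 1 := by rw [pow_one, mul_comm]
          _ ≤ Wgt m n v * Z ^ (pathOf n v n) :=
              mul_le_mul_right (pow_le_pow_right₀ hZ1 hpos) _
    calc ∑' v : Fin n → SS, Z * Wgt m n v
        ≤ ∑' v : Fin n → SS, Wgt m n v * Z ^ (pathOf n v n) := ENNReal.tsum_le_tsum h1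
      _ ≤ R ^ n * Z := master hm n
      _ = Z * R ^ n := by ring
  exact (ENNReal.mul_le_mul_iff_right hZ0 hZtop).mp key

end measureA

section final

lemma msingle (n : ℕ) : MeasurableSet {ω : ℕ → ℕ | ω n = 1} :=
  (measurable_pi_apply n) (measurableSet_singleton 1)


/-- For the Markov chain `(N_n)` on the positive integers with transition
probabilities `p(i,j) = (i+j-1 choose i)·m^(i+1)/(m+1)^(i+j)`, started at `1`, the first
return time `γ = inf {n ≥ 1 : N_n = 1}` has an exponential moment: there is `r > 0` with
`E[exp(r·γ)] < ∞` (in particular `γ < ∞` a.s.: trajectories that never return contribute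
`∞` to the expectation). -/
theorem return_time_exponential_moment (m : ℝ) (hm : 1 < m)
    (μ : Measure (ℕ → ℕ)) [IsProbabilityMeasure μ] (hμ : IsLocalTimeChain m μ) :
    ∃ r : ℝ, 0 < r ∧
      ∫⁻ ω, (if ∃ n : ℕ, 1 ≤ n ∧ ω n = 1
          then ENNReal.ofReal (Real.exp (r * (retTime ω : ℝ)))
          else ∞) ∂μ < ∞ := by
  have hε0 := eps_pos hm
  have hεs := eps_small hm
  have hρ1 : ρc m < 1 := by rw [ρc]; nlinarith
  have hρ0 : 0 < ρc m := by rw [ρc]; nlinarith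
  -- choice of r
  obtain ⟨y, hy⟩ : ∃ y : ℝ, y = 1 - (εc m) ^ 2 / 2 := ⟨_, rfl⟩
  have hy0 : 0 < y := by rw [hy]; nlinarith
  have hy1 : y < 1 := by rw [hy]; nlinarith
  refine ⟨-Real.log y, by simpa using Real.log_neg hy0 hy1, ?_⟩
  obtain ⟨r, hr⟩ : ∃ r : ℝ, r = -Real.log y := ⟨_, rfl⟩
  rw [← hr]
  have her : Real.exp r = y⁻¹ := by
    rw [hr, Real.exp_neg, Real.exp_log hy0]
  have her0 : 0 ≤ Real.exp r := (Real.exp_pos r).le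
  -- the sets
  set E : Set (ℕ → ℕ) := {ω | ∃ n : ℕ, 1 ≤ n ∧ ω n = 1} with hE
  have hEm : MeasurableSet E := by
    have h : E = ⋃ n, ⋃ (_ : 1 ≤ n), {ω : ℕ → ℕ | ω n = 1} := by
      ext ω; simp [hE]
    rw [h]
    exact MeasurableSet.iUnion fun n => MeasurableSet.iUnion fun _ => msingle n
  set D : ℕ → Set (ℕ → ℕ) :=
    fun n => {ω | ω n = 1 ∧ ∀ k, 1 ≤ k → k < n → ω k ≠ 1} with hD
  have hDm : ∀ n, MeasurableSet (D n) := by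
    intro n
    have h : D n = {ω : ℕ → ℕ | ω n = 1} ∩
        ⋂ (k) (_ : 1 ≤ k) (_ : k < n), {ω : ℕ → ℕ | ω k = 1}ᶜ := by
      ext ω; simp [hD]
    rw [h]
    exact (msingle n).inter <| MeasurableSet.iInter fun k => MeasurableSet.iInter fun _ =>
      MeasurableSet.iInter fun _ => (msingle k).compl
  set B : Set (ℕ → ℕ) := {ω | ω 0 = 1}ᶜ with hB
  have hBzero : μ B = 0 := by
    have h1 : μ {ω : ℕ → ℕ | ∀ k ≤ 0, ω k = (fun _ => 1) k} = 1 := by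
      rw [hμ 0 (fun _ => 1)]; simp
    have h2 : {ω : ℕ → ℕ | ∀ k ≤ 0, ω k = (fun _ => 1) k} = {ω : ℕ → ℕ | ω 0 = 1} := by
      ext ω
      constructor
      · intro h; exact h 0 le_rfl
      · intro h k hk; rw [Nat.le_zero.mp hk]; exact h
    rw [h2] at h1
    rw [hB, measure_compl (msingle 0) (measure_ne_top μ _), h1, measure_univ]
    simp
  -- tail bounds
  have hDsub : ∀ n : ℕ, D (n + 1) ⊆ Acyl n ∪ B := by
    intro n ω hω
    by_cases h0 : ω 0 = 1
    · exact Or.inl ⟨h0, fun k hk1 hkn => hω.2 k hk1 (by omega)⟩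
    · exact Or.inr h0
  have hDle : ∀ n : ℕ, μ (D (n + 1)) ≤ (ENNReal.ofReal (ρc m)) ^ n := by
    intro n
    calc μ (D (n + 1)) ≤ μ (Acyl n ∪ B) := measure_mono (hDsub n)
      _ ≤ μ (Acyl n) + μ B := measure_union_le _ _
      _ = μ (Acyl n) := by rw [hBzero, add_zero]
      _ ≤ (ENNReal.ofReal (ρc m)) ^ n := measure_Acyl_le hm hμ n
  have hEc : μ Eᶜ = 0 := by
    have hsub : ∀ n : ℕ, Eᶜ ⊆ Acyl n ∪ B := by
      intro n ω hω
      have hω' : ∀ k : ℕ, 1 ≤ k → ω k ≠ 1 := by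
        intro k h1 hc
        exact hω ⟨k, h1, hc⟩
      by_cases h0 : ω 0 = 1
      · exact Or.inl ⟨h0, fun k hk1 _ => hω' k hk1⟩
      · exact Or.inr h0
    have hle : ∀ n : ℕ, μ Eᶜ ≤ (ENNReal.ofReal (ρc m)) ^ n := by
      intro n
      calc μ Eᶜ ≤ μ (Acyl n ∪ B) := measure_mono (hsub n)
        _ ≤ μ (Acyl n) + μ B := measure_union_le _ _
        _ = μ (Acyl n) := by rw [hBzero, add_zero]
        _ ≤ (ENNReal.ofReal (ρc m)) ^ n := measure_Acyl_le hm hμ n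
    have hR1 : ENNReal.ofReal (ρc m) < 1 := ENNReal.ofReal_lt_one.mpr hρ1
    have htend := ENNReal.tendsto_pow_atTop_nhds_zero_of_lt_one hR1
    have := ge_of_tendsto htend (Filter.Eventually.of_forall hle)
    exact le_antisymm this zero_le
  -- pointwise domination
  set H : (ℕ → ℕ) → ℝ≥0∞ := fun ω =>
    (∑' n : ℕ, (D (n + 1)).indicator
      (fun _ => ENNReal.ofReal (Real.exp (r * ((n : ℝ) + 1)))) ω) +
    Eᶜ.indicator (fun _ => (∞ : ℝ≥0∞)) ω with hH
  have hGH : ∀ ω, (if ∃ n : ℕ, 1 ≤ n ∧ ω n = 1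
      then ENNReal.ofReal (Real.exp (r * (retTime ω : ℝ))) else ∞) ≤ H ω := by
    intro ω
    by_cases hωE : ω ∈ E
    · have hcond : ∃ n : ℕ, 1 ≤ n ∧ ω n = 1 := hωE
      rw [if_pos hcond]
      obtain ⟨n0, hn0⟩ := hωE
      have hne : {n : ℕ | 1 ≤ n ∧ ω n = 1}.Nonempty := ⟨n0, hn0⟩
      have hmem : retTime ω ∈ {n : ℕ | 1 ≤ n ∧ ω n = 1} := Nat.sInf_mem hne
      set N := retTime ω with hN
      have hmin : ∀ k, 1 ≤ k → k < N → ω k ≠ 1 := by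
        intro k h1 h2 hc
        have hle : retTime ω ≤ k :=
          Nat.sInf_le (show k ∈ {n : ℕ | 1 ≤ n ∧ ω n = 1} from ⟨h1, hc⟩)
        omega
      have hωD : ω ∈ D N := ⟨hmem.2, hmin⟩
      have hN1 : 1 ≤ N := hmem.1
      have hsplit : N - 1 + 1 = N := by omega
      have hterm : (D (N - 1 + 1)).indicator
          (fun _ => ENNReal.ofReal (Real.exp (r * (((N - 1 : ℕ) : ℝ) + 1)))) ω =
          ENNReal.ofReal (Real.exp (r * (N : ℝ))) := by
        rw [hsplit]
        rw [Set.indicator_of_mem hωD]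
        congr 2
        have : ((N - 1 : ℕ) : ℝ) + 1 = (N : ℝ) := by
          rw [← Nat.cast_add_one, hsplit]
        rw [this]
      calc ENNReal.ofReal (Real.exp (r * (N : ℝ)))
          = (D (N - 1 + 1)).indicator
            (fun _ => ENNReal.ofReal (Real.exp (r * (((N - 1 : ℕ) : ℝ) + 1)))) ω := hterm.symm
        _ ≤ ∑' n : ℕ, (D (n + 1)).indicator
            (fun _ => ENNReal.ofReal (Real.exp (r * ((n : ℝ) + 1)))) ω :=
            ENNReal.le_tsum (N - 1)
        _ ≤ H ω := le_self_add
    · have hcond : ¬ ∃ n : ℕ, 1 ≤ n ∧ ω n = 1 := hωE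
      rw [if_neg hcond]
      have h1 : Eᶜ.indicator (fun _ => (∞ : ℝ≥0∞)) ω = ∞ :=
        Set.indicator_of_mem (show ω ∈ Eᶜ from hωE) _
      rw [hH]
      simp only [h1]
      simp
  refine lt_of_le_of_lt (lintegral_mono hGH) ?_
  -- compute ∫ H
  have hint : ∫⁻ ω, H ω ∂μ =
      (∑' n : ℕ, ENNReal.ofReal (Real.exp (r * ((n : ℝ) + 1))) * μ (D (n + 1))) +
        ∞ * μ Eᶜ := by
    rw [hH]
    rw [lintegral_add_right _ (measurable_const.indicator hEm.compl)]
    congr 1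
    · rw [lintegral_tsum fun n => (measurable_const.indicator (hDm (n + 1))).aemeasurable]
      exact tsum_congr fun n => lintegral_indicator_const (hDm (n + 1)) _
    · exact lintegral_indicator_const hEm.compl _
  rw [hint, hEc, mul_zero, add_zero]
  -- geometric bound
  obtain ⟨s, hs⟩ : ∃ s : ℝ≥0∞, s = ENNReal.ofReal (Real.exp r) * ENNReal.ofReal (ρc m) :=
    ⟨_, rfl⟩
  have hs1 : s < 1 := by
    rw [hs, ← ENNReal.ofReal_mul her0]
    apply ENNReal.ofReal_lt_one.mpr
    rw [her]
    rw [inv_mul_lt_iff₀ hy0, mul_one, hy, ρc]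
    nlinarith
  have hterm : ∀ n : ℕ,
      ENNReal.ofReal (Real.exp (r * ((n : ℝ) + 1))) * μ (D (n + 1)) ≤
        ENNReal.ofReal (Real.exp r) * s ^ n := by
    intro n
    have he1 : Real.exp (r * ((n : ℝ) + 1)) = Real.exp r ^ (n + 1) := by
      rw [← Real.exp_nat_mul]
      congr 1
      push_cast
      ring
    rw [he1, ENNReal.ofReal_pow her0]
    calc ENNReal.ofReal (Real.exp r) ^ (n + 1) * μ (D (n + 1))
        ≤ ENNReal.ofReal (Real.exp r) ^ (n + 1) * ENNReal.ofReal (ρc m) ^ n :=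
          mul_le_mul_right (hDle n) _
      _ = ENNReal.ofReal (Real.exp r) * s ^ n := by
          rw [hs, mul_pow, pow_succ]
          ring
  calc ∑' n : ℕ, ENNReal.ofReal (Real.exp (r * ((n : ℝ) + 1))) * μ (D (n + 1))
      ≤ ∑' n : ℕ, ENNReal.ofReal (Real.exp r) * s ^ n := ENNReal.tsum_le_tsum hterm
    _ = ENNReal.ofReal (Real.exp r) * ∑' n : ℕ, s ^ n := ENNReal.tsum_mul_left
    _ = ENNReal.ofReal (Real.exp r) * (1 - s)⁻¹ := by rw [ENNReal.tsum_geometric]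
    _ < ∞ := by
        apply ENNReal.mul_lt_top ENNReal.ofReal_lt_top
        exact ENNReal.inv_lt_top.mpr (tsub_pos_of_lt hs1)

end final
end

section
/- The probability distribution π on the positive integers given by π(i) := (m-1)^2 · i · m^(-(i+1)) is reversible for the transition probabilities p: for all positive integers i, j one has π(i)·p(i,j) = π(j)·p(j,i), and moreover Σ_{i≥1} π(i) = 1. -/
/-- The distribution `π(i) = (m-1)^2 * i * m^(-(i+1))` on the positive integers. -/
noncomputable def piDist (m : ℝ) (i : ℕ) : ℝ :=
  (m - 1) ^ 2 * (i : ℝ) * m ^ (-((i : ℤ) + 1))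

lemma choose_symm_aux (a b : ℕ) :
    (a + 1) * (a + b + 1).choose (a + 1) = (b + 1) * (a + b + 1).choose (b + 1) := by
  have h1 := Nat.add_one_mul_choose_eq (a + b) a
  have h2 := Nat.add_one_mul_choose_eq (a + b) b
  have hs : (a + b).choose a = (a + b).choose b := by
    have := Nat.choose_symm (Nat.le_add_left b a)
    simpa using this
  calc (a + 1) * (a + b + 1).choose (a + 1)
      = (a + b + 1) * (a + b).choose a := by rw [mul_comm]; exact h1.symm
    _ = (a + b + 1) * (a + b).choose b := by rw [hs]
    _ = (b + 1) * (a + b + 1).choose (b + 1) := by rw [h2]; exact mul_comm _ _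

lemma expand_aux (m : ℝ) (hm : 1 < m) (k l : ℕ) :
    piDist m (k + 1) * ptrans m (k + 1) (l + 1) =
      (m - 1) ^ 2 * (((k + 1) * ((k + l + 1).choose (k + 1)) : ℕ) : ℝ)
        / (m + 1) ^ (k + l + 2) := by
  have hmne : m ≠ 0 := by positivity
  unfold piDist ptrans
  have h1 : (k + 1 + (l + 1) - 1) = k + l + 1 := by omega
  have h2 : (k + 1 + (l + 1)) = k + l + 2 := by omega
  rw [h1, h2]
  have hzz : m ^ (-(((k + 1 : ℕ) : ℤ)) - 1) = (m ^ (k + 2))⁻¹ := by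
    rw [show (-(((k + 1 : ℕ) : ℤ)) - 1) = -((k + 2 : ℕ) : ℤ) by push_cast; ring,
      zpow_neg, zpow_natCast]
  rw [show (-(((k + 1 : ℕ) : ℤ) + 1)) = (-(((k + 1 : ℕ) : ℤ)) - 1) by ring, hzz]
  have hmp : (0:ℝ) < m + 1 := by linarith
  have hm2 : (m : ℝ) ^ (k + 2) ≠ 0 := by positivity
  have hmp2 : ((m + 1 : ℝ)) ^ (k + l + 2) ≠ 0 := by positivity
  push_cast
  field_simp

/-- `π(i) = (m-1)^2 · i · m^(-(i+1))` is a reversible probability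
distribution for the transition probabilities `p`: `π(i)p(i,j) = π(j)p(j,i)` for all
positive integers `i, j`, and `Σ_{i≥1} π(i) = 1`. -/
theorem piDist_reversible_and_probability (m : ℝ) (hm : 1 < m) :
    (∀ i j : ℕ+, piDist m (i : ℕ) * ptrans m (i : ℕ) (j : ℕ) =
        piDist m (j : ℕ) * ptrans m (j : ℕ) (i : ℕ)) ∧
      ∑' i : ℕ+, piDist m (i : ℕ) = 1 := by
  have hm0 : (0:ℝ) < m := by linarith
  have hmne : m ≠ 0 := ne_of_gt hm0
  constructor
  · intro i j
    obtain ⟨a, ha⟩ : ∃ a, (i : ℕ) = a + 1 := ⟨(i:ℕ) - 1, by have := i.pos; omega⟩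
    obtain ⟨b, hb⟩ : ∃ b, (j : ℕ) = b + 1 := ⟨(j:ℕ) - 1, by have := j.pos; omega⟩
    rw [ha, hb, expand_aux m hm a b, expand_aux m hm b a,
      show b + a + 1 = a + b + 1 by omega, show b + a + 2 = a + b + 2 by omega,
      choose_symm_aux a b]
  · have hr : ‖(m⁻¹ : ℝ)‖ < 1 := by
      rw [Real.norm_eq_abs, abs_of_pos (inv_pos.mpr hm0)]
      exact inv_lt_one_of_one_lt₀ hm
    have hgeo : (∑' n : ℕ, (n : ℝ) * m⁻¹ ^ n) = m⁻¹ / (1 - m⁻¹) ^ 2 :=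
      tsum_coe_mul_geometric_of_norm_lt_one hr
    have hre : (∑' i : ℕ+, piDist m (i : ℕ)) = ∑' n : ℕ, piDist m (n + 1) := by
      rw [← Equiv.pnatEquivNat.symm.tsum_eq (fun i : ℕ+ => piDist m (i : ℕ))]
      rfl
    rw [hre]
    have hshape : ∀ n : ℕ, piDist m (n + 1) =
        (m - 1) ^ 2 * m⁻¹ * ((n + 1 : ℝ) * m⁻¹ ^ (n + 1)) := by
      intro n
      unfold piDist
      have hz : m ^ (-(((n + 1 : ℕ) : ℤ)) - 1) = m⁻¹ * m⁻¹ ^ (n + 1) := by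
        rw [show (-(((n + 1 : ℕ) : ℤ)) - 1) = -((n + 2 : ℕ) : ℤ) by push_cast; ring,
          zpow_neg, zpow_natCast, ← inv_pow, pow_succ']
      rw [show (-(((n + 1 : ℕ) : ℤ) + 1)) = (-(((n + 1 : ℕ) : ℤ)) - 1) by ring, hz]
      push_cast
      ring
    simp_rw [hshape]
    rw [tsum_mul_left]
    have hsum : (∑' n : ℕ, ((n : ℝ) + 1) * m⁻¹ ^ (n + 1)) = m⁻¹ / (1 - m⁻¹) ^ 2 := by
      have hsummable : Summable (fun n : ℕ => (n : ℝ) * m⁻¹ ^ n) :=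
        (hasSum_coe_mul_geometric_of_norm_lt_one hr).summable
      rw [← hgeo, Summable.tsum_eq_zero_add hsummable]
      push_cast
      simp
    rw [hsum]
    have hm1 : (m - 1) ≠ 0 := ne_of_gt (by linarith)
    have h1m : (1 - m⁻¹) = (m - 1) / m := by field_simp
    rw [h1m]
    field_simp
end

section
/- The vector a(i) := (m-1)·m^(-i) is a left eigenvector of the mean matrix M for the eigenvalue 1: for every positive integer j, Σ_{i≥1} a(i)·M(i,j) = a(j); moreover Σ_{i≥1} a(i) = 1. -/
/-- The mean offspring matrix `M(i,j) = (i+j-1 choose j) * m^(i+1)/(m+1)^(i+j)` of the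
multi-type Galton–Watson tree of edge local times. -/
noncomputable def Mmat (m : ℝ) (i j : ℕ) : ℝ :=
  ((i + j - 1).choose j : ℝ) * m ^ (i + 1) / (m + 1) ^ (i + j)

/-- The vector `a(i) = (m-1) * m^(-i)`. -/
noncomputable def avec (m : ℝ) (i : ℕ) : ℝ := (m - 1) * m ^ (-(i : ℤ))

/-- `a(i) = (m-1)·m^(-i)` is a left eigenvector of the mean matrix `M` for
the eigenvalue `1`: for every positive integer `j`, `Σ_{i≥1} a(i)·M(i,j) = a(j)`;
moreover `Σ_{i≥1} a(i) = 1`. -/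
theorem avec_left_eigenvector (m : ℝ) (hm : 1 < m) :
    (∀ j : ℕ+, ∑' i : ℕ+, avec m (i : ℕ) * Mmat m (i : ℕ) (j : ℕ) = avec m (j : ℕ)) ∧
      ∑' i : ℕ+, avec m (i : ℕ) = 1 := by
  have hm0 : (0:ℝ) < m := by linarith
  have hm1 : (0:ℝ) < m + 1 := by linarith
  have hmne : m ≠ 0 := ne_of_gt hm0
  have hm1ne : m + 1 ≠ 0 := ne_of_gt hm1
  have hx : ‖(m+1)⁻¹‖ < 1 := by
    rw [Real.norm_eq_abs, abs_of_pos (inv_pos.2 hm1)]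
    rw [inv_lt_one_iff₀]; right; linarith
  constructor
  · intro j
    set k : ℕ := (j : ℕ) with hk
    rw [← Equiv.pnatEquivNat.symm.tsum_eq]
    have hterm : ∀ n : ℕ,
        avec m ((Equiv.pnatEquivNat.symm n : ℕ+) : ℕ) *
          Mmat m ((Equiv.pnatEquivNat.symm n : ℕ+) : ℕ) k
        = ((m-1)*m/(m+1)^(k+1)) * (((n+k).choose k : ℝ) * ((m+1)⁻¹)^n) := by
      intro n
      have hc : ((Equiv.pnatEquivNat.symm n : ℕ+) : ℕ) = n + 1 := rfl
      rw [hc]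
      have h1 : n + 1 + k - 1 = n + k := by omega
      simp only [avec, Mmat, h1]
      rw [zpow_neg, zpow_natCast, inv_pow]
      field_simp
      ring
    rw [tsum_congr hterm,
      tsum_mul_left, tsum_choose_mul_geometric_of_norm_lt_one k hx]
    have h2 : 1 - (m+1)⁻¹ = m / (m+1) := by field_simp; ring
    rw [h2, div_pow, avec, zpow_neg, zpow_natCast]
    field_simp
    ring
  · rw [← Equiv.pnatEquivNat.symm.tsum_eq]
    have hterm : ∀ n : ℕ,
        avec m ((Equiv.pnatEquivNat.symm n : ℕ+) : ℕ) = ((m-1)/m) * (m⁻¹)^n := by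
      intro n
      have hc : ((Equiv.pnatEquivNat.symm n : ℕ+) : ℕ) = n + 1 := rfl
      rw [hc, avec, zpow_neg, zpow_natCast]
      field_simp
      rw [one_div, inv_pow, pow_succ]; field_simp
    have hr : m⁻¹ < 1 := by rw [inv_lt_one_iff₀]; right; exact hm
    have hr0 : (0:ℝ) ≤ m⁻¹ := le_of_lt (inv_pos.2 hm0)
    rw [tsum_congr hterm, tsum_mul_left, tsum_geometric_of_lt_one hr0 hr]
    have h3 : 1 - m⁻¹ = (m-1)/m := by field_simp
    rw [h3]
    exact mul_inv_cancel₀ (div_ne_zero (by linarith) hmne)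
end

section
/- The vector b(j) := (1 - 1/m)·j is a right eigenvector of the mean matrix M for the eigenvalue 1: for every positive integer i, Σ_{j≥1} M(i,j)·b(j) = b(i), i.e. Σ_{j≥1} j·M(i,j) = i; moreover Σ_{i≥1} (m-1)·m^(-i)·b(i) = 1. -/
/-- The vector `b(j) = (1 - 1/m) * j`. -/
noncomputable def bvec (m : ℝ) (j : ℕ) : ℝ := (1 - 1 / m) * (j : ℝ)

lemma choose_aux (k n : ℕ) :
    (n + 1) * (n + (k + 1)).choose (n + 1) = (k + 1) * (n + (k + 1)).choose (k + 1) := by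
  have h1 : (n + k + 1) * (n + k).choose n = (n + k + 1).choose (n + 1) * (n + 1) := by
    simpa [Nat.succ_eq_add_one] using Nat.add_one_mul_choose_eq (n + k) n
  have h2 : (n + k + 1) * (n + k).choose k = (n + k + 1).choose (k + 1) * (k + 1) := by
    simpa [Nat.succ_eq_add_one] using Nat.add_one_mul_choose_eq (n + k) k
  have hs : (n + k).choose n = (n + k).choose k := by
    have := Nat.choose_symm (n := n + k) (k := k) (Nat.le_add_left k n)
    simpa [Nat.add_sub_cancel] using this
  have e1 : n + (k + 1) = n + k + 1 := by omega
  rw [e1]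
  calc (n + 1) * (n + k + 1).choose (n + 1)
      = (n + k + 1).choose (n + 1) * (n + 1) := mul_comm _ _
    _ = (n + k + 1) * (n + k).choose n := h1.symm
    _ = (n + k + 1) * (n + k).choose k := by rw [hs]
    _ = (n + k + 1).choose (k + 1) * (k + 1) := h2
    _ = (k + 1) * (n + k + 1).choose (k + 1) := mul_comm _ _

lemma hasSum_pnat_of_nat {f : ℕ → ℝ} {a : ℝ} (h : HasSum f a) (h0 : f 0 = 0) :
    HasSum (fun j : ℕ+ ↦ f (j : ℕ)) a := by
  have hinj : Function.Injective (fun j : ℕ+ ↦ (j : ℕ)) := fun a b hab ↦ PNat.coe_injective hab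
  have hsupp : ∀ x ∉ Set.range (fun j : ℕ+ ↦ (j : ℕ)), f x = 0 := by
    intro x hx
    have : x = 0 := by
      by_contra hx0
      exact hx ⟨⟨x, Nat.pos_of_ne_zero hx0⟩, rfl⟩
    simpa [this] using h0
  exact (Function.Injective.hasSum_iff hinj hsupp).mpr h

lemma core_hasSum (m : ℝ) (hm : 1 < m) (i : ℕ) (hi : 0 < i) :
    HasSum (fun j : ℕ+ ↦ ((j : ℕ) : ℝ) * Mmat m i (j : ℕ)) (i : ℝ) := by
  have hm0 : (0 : ℝ) < m := by linarith
  have hm1 : (0 : ℝ) < m + 1 := by linarith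
  have hmne : m ≠ 0 := ne_of_gt hm0
  have hm1ne : m + 1 ≠ 0 := ne_of_gt hm1
  set x : ℝ := 1 / (m + 1) with hxdef
  have hx0 : 0 < x := by positivity
  have hx1 : x < 1 := by
    rw [hxdef, div_lt_one hm1]; linarith
  have hx : ‖x‖ < 1 := by rw [Real.norm_eq_abs, abs_of_pos hx0]; exact hx1
  obtain ⟨k, rfl⟩ : ∃ k, i = k + 1 := ⟨i - 1, by omega⟩
  have H := hasSum_choose_mul_geometric_of_norm_lt_one (k + 1) hx
  have H2 := H.mul_left (((k + 1 : ℕ) : ℝ) * m ^ (k + 1 + 1) * x ^ (k + 1 + 1))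
  set f : ℕ → ℝ := fun n ↦ ((n : ℕ) : ℝ) * Mmat m (k + 1) n with hf
  have hf0 : f 0 = 0 := by simp [hf]
  have hterm : ∀ n : ℕ,
      ((k + 1 : ℕ) : ℝ) * m ^ (k + 1 + 1) * x ^ (k + 1 + 1) *
        (((n + (k + 1)).choose (k + 1) : ℝ) * x ^ n) = f (n + 1) := by
    intro n
    have hidx : k + 1 + (n + 1) - 1 = n + (k + 1) := by omega
    have hc : ((n + 1 : ℕ) : ℝ) * ((n + (k + 1)).choose (n + 1) : ℝ)
        = ((k + 1 : ℕ) : ℝ) * ((n + (k + 1)).choose (k + 1) : ℝ) := by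
      rw [← Nat.cast_mul, ← Nat.cast_mul, choose_aux k n]
    have hpow : (m + 1) ^ (k + 1 + (n + 1)) = (m + 1) ^ (k + 1 + 1) * (m + 1) ^ n := by
      rw [← pow_add]; ring_nf
    simp only [hf, Mmat, hidx]
    calc ((k + 1 : ℕ) : ℝ) * m ^ (k + 1 + 1) * x ^ (k + 1 + 1) *
          (((n + (k + 1)).choose (k + 1) : ℝ) * x ^ n)
        = (((k + 1 : ℕ) : ℝ) * ((n + (k + 1)).choose (k + 1) : ℝ)) *
            (m ^ (k + 1 + 1) * x ^ (k + 1 + 1) * x ^ n) := by ring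
      _ = (((n + 1 : ℕ) : ℝ) * ((n + (k + 1)).choose (n + 1) : ℝ)) *
            (m ^ (k + 1 + 1) * x ^ (k + 1 + 1) * x ^ n) := by rw [hc]
      _ = ((n + 1 : ℕ) : ℝ) *
            (((n + (k + 1)).choose (n + 1) : ℝ) * m ^ (k + 1 + 1) / (m + 1) ^ (k + 1 + (n + 1)))
          := by
            rw [hxdef, hpow, one_div, inv_pow, inv_pow]
            field_simp
  have hval : ((k + 1 : ℕ) : ℝ) * m ^ (k + 1 + 1) * x ^ (k + 1 + 1) *
      (1 / (1 - x) ^ (k + 1 + 1)) = ((k + 1 : ℕ) : ℝ) := by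
    have h1x : 1 - x = m / (m + 1) := by
      rw [hxdef]; field_simp; ring
    rw [h1x, hxdef, div_pow, div_pow, one_pow]
    field_simp
  have H3 : HasSum (fun n ↦ f (n + 1)) (((k + 1 : ℕ) : ℝ)) := by
    rw [← hval]
    exact H2.congr_fun fun n ↦ (hterm n).symm
  have H4 : HasSum f (((k + 1 : ℕ) : ℝ)) := by
    have := (hasSum_nat_add_iff (f := f) 1).mp H3
    simpa [hf0] using this
  exact hasSum_pnat_of_nat H4 hf0

/-- `b(j) = (1-1/m)·j` is a right eigenvector of the mean matrix `M` for
the eigenvalue `1`: for every positive integer `i`, `Σ_{j≥1} M(i,j)·b(j) = b(i)`, i.e.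
`Σ_{j≥1} j·M(i,j) = i`; moreover `Σ_{i≥1} (m-1)·m^(-i)·b(i) = 1`. -/
theorem bvec_right_eigenvector (m : ℝ) (hm : 1 < m) :
    (∀ i : ℕ+, ∑' j : ℕ+, Mmat m (i : ℕ) (j : ℕ) * bvec m (j : ℕ) = bvec m (i : ℕ)) ∧
    (∀ i : ℕ+, ∑' j : ℕ+, ((j : ℕ) : ℝ) * Mmat m (i : ℕ) (j : ℕ) = ((i : ℕ) : ℝ)) ∧
      ∑' i : ℕ+, (m - 1) * m ^ (-((i : ℕ) : ℤ)) * bvec m (i : ℕ) = 1 := by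
  have hm0 : (0 : ℝ) < m := by linarith
  have hmne : m ≠ 0 := ne_of_gt hm0
  refine ⟨?_, ?_, ?_⟩
  · intro i
    have H := core_hasSum m hm (i : ℕ) i.pos
    have H2 := H.mul_left (1 - 1 / m)
    have H3 : HasSum (fun j : ℕ+ ↦ Mmat m (i : ℕ) (j : ℕ) * bvec m (j : ℕ))
        ((1 - 1 / m) * ((i : ℕ) : ℝ)) := by
      refine H2.congr_fun fun j ↦ ?_
      simp only [bvec]; ring
    rw [H3.tsum_eq, bvec]
  · intro i
    exact (core_hasSum m hm (i : ℕ) i.pos).tsum_eq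
  · have hr : ‖m⁻¹‖ < 1 := by
      rw [Real.norm_eq_abs, abs_of_pos (by positivity)]
      rw [inv_lt_one_iff₀]; right; exact hm
    have H := hasSum_coe_mul_geometric_of_norm_lt_one hr
    have H2 := H.mul_left ((m - 1) * (1 - 1 / m))
    set f : ℕ → ℝ := fun n ↦ (m - 1) * m ^ (-((n : ℕ) : ℤ)) * bvec m n with hf
    have hf0 : f 0 = 0 := by simp [hf, bvec]
    have hval : (m - 1) * (1 - 1 / m) * (m⁻¹ / (1 - m⁻¹) ^ 2) = 1 := by
      have hne : m - 1 ≠ 0 := by intro h; nlinarith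
      have h1m : 1 - m⁻¹ ≠ 0 := by
        rw [sub_ne_zero]
        intro h
        have : m = 1 := by field_simp at h; linarith
        linarith
      field_simp
    have H3 : HasSum f 1 := by
      rw [← hval]
      refine H2.congr_fun fun n ↦ ?_
      simp only [hf, bvec]
      rw [zpow_neg, zpow_natCast, ← inv_pow]
      ring
    exact ((hasSum_pnat_of_nat H3 hf0).tsum_eq)
end

section
/- Assume ψ(1) = 1. Then the vector b(j) := j is a right eigenvector of the mean matrix M for the eigenvalue 1: for every positive integer i, Σ_{j≥1} j·M(i,j) = i. -/
open MeasureTheory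
open scoped ENNReal

/-- `ψ(t) = E[Σ_{k=1}^N e^{-t·V_k}]`, the Laplace transform of the first generation of
the branching random walk with `N` children and displacements `(V_k)`. -/
noncomputable def psiFn {Ω : Type*} [MeasurableSpace Ω] (μ : Measure Ω)
    (N : Ω → ℕ) (V : ℕ → Ω → ℝ) (t : ℝ) : ℝ≥0∞ :=
  ∫⁻ ω, ENNReal.ofReal (∑ k ∈ Finset.range (N ω), Real.exp (-t * V k ω)) ∂μ

/-- The mean matrix `M(i,j) = E[Σ_{k=1}^N (i+j-1 choose j)·e^{-j·V_k}/(1+e^{-V_k})^{i+j}]`. -/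
noncomputable def Mbrw {Ω : Type*} [MeasurableSpace Ω] (μ : Measure Ω)
    (N : Ω → ℕ) (V : ℕ → Ω → ℝ) (i j : ℕ) : ℝ≥0∞ :=
  ∫⁻ ω, ENNReal.ofReal (∑ k ∈ Finset.range (N ω),
      ((i + j - 1).choose j : ℝ) * Real.exp (-(j : ℝ) * V k ω) /
        (1 + Real.exp (-V k ω)) ^ (i + j)) ∂μ

lemma nat_ident (i n : ℕ) :
    (n + 1) * (i + n).choose (n + 1) = i * (n + i).choose i := by
  have h2 : (i + n).choose n = (n + i).choose i := by
    rw [add_comm n i, ← Nat.choose_symm (Nat.le_add_right i n)]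
    congr 1; omega
  have h1 : (i + n).choose (n + 1) * (n + 1) = (i + n).choose n * i := by
    simpa using Nat.choose_succ_right_eq (i + n) n
  rw [mul_comm, h1, h2, mul_comm]

lemma keyHasSum (i : ℕ) {x : ℝ} (hx : 0 < x) :
    HasSum (fun j : ℕ+ =>
      (j : ℝ) * (((i + (j:ℕ) - 1).choose (j:ℕ) : ℝ) * x ^ (j:ℕ) / (1 + x) ^ (i + (j:ℕ))))
      (i * x) := by
  have h1x : (0:ℝ) < 1 + x := by linarith
  have h1x' : (1 + x : ℝ) ≠ 0 := ne_of_gt h1x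
  set y : ℝ := x / (1 + x) with hy
  have hy0 : 0 ≤ y := by positivity
  have hy1 : y < 1 := by rw [hy, div_lt_one h1x]; linarith
  have hnorm : ‖y‖ < 1 := by rw [Real.norm_eq_abs, abs_of_nonneg hy0]; exact hy1
  have H := (hasSum_choose_mul_geometric_of_norm_lt_one i hnorm).mul_left
    ((i : ℝ) * x / (1 + x) ^ (i + 1))
  have h1y : 1 - y = 1 / (1 + x) := by rw [hy]; field_simp; ring
  have hsum : (i : ℝ) * x / (1 + x) ^ (i + 1) * (1 / (1 - y) ^ (i + 1)) = i * x := by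
    rw [h1y]; field_simp
    rw [div_pow, one_pow, mul_one_div, mul_div_assoc, div_self (pow_ne_zero _ h1x'), mul_one]
  rw [hsum] at H
  apply (Equiv.pnatEquivNat.symm.hasSum_iff).1
  convert H using 2 with n
  · rfl
  have e1 : ((Equiv.pnatEquivNat.symm n : ℕ+) : ℕ) = n + 1 := by
    simp [Equiv.pnatEquivNat]
  simp only [Function.comp_apply, e1]
  have e2 : i + (n + 1) - 1 = i + n := by omega
  rw [e2]
  have key : ((n + 1 : ℕ) : ℝ) * (((i + n).choose (n + 1) : ℕ) : ℝ)
      = (i : ℝ) * (((n + i).choose i : ℕ) : ℝ) := by exact_mod_cast nat_ident i n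
  rw [hy, div_pow, show i + (n + 1) = n + (i + 1) by ring, pow_add]
  push_cast at key ⊢
  field_simp
  linear_combination ((1 + x) ^ (i + 1) * (1 + x) ^ n) * key

lemma keyTsum (i : ℕ) (v : ℝ) :
    ∑' j : ℕ+, ((j : ℕ) : ℝ≥0∞) * ENNReal.ofReal
      (((i + (j:ℕ) - 1).choose (j:ℕ) : ℝ) * Real.exp (-(j:ℝ) * v)
        / (1 + Real.exp (-v)) ^ (i + (j:ℕ)))
      = (i : ℝ≥0∞) * ENNReal.ofReal (Real.exp (-v)) := by
  have hx : 0 < Real.exp (-v) := Real.exp_pos _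
  set x := Real.exp (-v) with hxd
  have hexp : ∀ j : ℕ+, Real.exp (-(j:ℝ) * v) = x ^ (j:ℕ) := by
    intro j
    rw [hxd, ← Real.exp_nat_mul]
    congr 1; ring
  have hterm : ∀ j : ℕ+,
      ((j : ℕ) : ℝ≥0∞) * ENNReal.ofReal
        (((i + (j:ℕ) - 1).choose (j:ℕ) : ℝ) * Real.exp (-(j:ℝ) * v)
          / (1 + Real.exp (-v)) ^ (i + (j:ℕ)))
      = ENNReal.ofReal ((j : ℝ) *
          (((i + (j:ℕ) - 1).choose (j:ℕ) : ℝ) * x ^ (j:ℕ) / (1 + x) ^ (i + (j:ℕ)))) := by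
    intro j
    rw [hexp j, ENNReal.ofReal_mul (by positivity), ENNReal.ofReal_natCast]
  rw [tsum_congr hterm,
    ← ENNReal.ofReal_tsum_of_nonneg (fun j => by positivity) (keyHasSum i hx).summable,
    (keyHasSum i hx).tsum_eq, ENNReal.ofReal_mul (by positivity), ENNReal.ofReal_natCast]

lemma meas_aux {Ω : Type*} [MeasurableSpace Ω] (N : Ω → ℕ) (hN : Measurable N)
    (g : ℕ → Ω → ℝ≥0∞) (hg : ∀ k, Measurable (g k)) :
    Measurable (fun ω => ∑ k ∈ Finset.range (N ω), g k ω) := by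
  have h : (fun ω => ∑ k ∈ Finset.range (N ω), g k ω)
      = fun ω => ∑' k : ℕ, if k < N ω then g k ω else 0 := by
    funext ω
    rw [tsum_eq_sum (s := Finset.range (N ω))
      (fun b hb => by simp only [Finset.mem_range, not_lt] at hb; simp [Nat.not_lt.2 hb])]
    exact (Finset.sum_congr rfl fun k hk => by simp [Finset.mem_range.1 hk]).symm
  rw [h]
  exact Measurable.ennreal_tsum fun k =>
    Measurable.ite (hN measurableSet_Ioi) (hg k) measurable_const


theorem brw_right_eigenvector {Ω : Type*} [MeasurableSpace Ω] (μ : Measure Ω)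
    [IsProbabilityMeasure μ] (N : Ω → ℕ) (V : ℕ → Ω → ℝ)
    (hN : Measurable N) (hV : ∀ k, Measurable (V k))
    (hψ1 : psiFn μ N V 1 = 1) :
    ∀ i : ℕ+, ∑' j : ℕ+, ((j : ℕ) : ℝ≥0∞) * Mbrw μ N V (i : ℕ) (j : ℕ) =
      ((i : ℕ) : ℝ≥0∞) := by
  intro i
  set t : ℕ → ℕ → Ω → ℝ := fun j k ω =>
    (((i:ℕ) + j - 1).choose j : ℝ) * Real.exp (-(j : ℝ) * V k ω) /
      (1 + Real.exp (-V k ω)) ^ ((i:ℕ) + j) with ht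
  have htnonneg : ∀ j k ω, 0 ≤ t j k ω := fun j k ω => by
    rw [ht]; positivity
  have htmeas : ∀ j k, Measurable (fun ω => ENNReal.ofReal (t j k ω)) := by
    intro j k
    apply Measurable.ennreal_ofReal
    exact (measurable_const.mul (((hV k).const_mul _).exp)).div
      ((measurable_const.add ((hV k).neg.exp)).pow_const _)
  -- rewrite the integrand of Mbrw into a measurable form
  have hrw : ∀ j : ℕ, (fun ω => ENNReal.ofReal (∑ k ∈ Finset.range (N ω), t j k ω))
      = fun ω => ∑ k ∈ Finset.range (N ω), ENNReal.ofReal (t j k ω) := by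
    intro j; funext ω
    exact ENNReal.ofReal_sum_of_nonneg fun k _ => htnonneg j k ω
  have hFmeas : ∀ j : ℕ+, Measurable (fun ω =>
      ((j : ℕ) : ℝ≥0∞) * ENNReal.ofReal (∑ k ∈ Finset.range (N ω), t (j:ℕ) k ω)) := by
    intro j
    have e : (fun ω => ((j : ℕ) : ℝ≥0∞) *
        ENNReal.ofReal (∑ k ∈ Finset.range (N ω), t (j:ℕ) k ω))
        = fun ω => ((j : ℕ) : ℝ≥0∞) *
          ∑ k ∈ Finset.range (N ω), ENNReal.ofReal (t (j:ℕ) k ω) := by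
      funext ω
      rw [ENNReal.ofReal_sum_of_nonneg fun k _ => htnonneg _ k ω]
    rw [e]
    exact (meas_aux N hN _ (htmeas (j:ℕ))).const_mul _
  calc ∑' j : ℕ+, ((j : ℕ) : ℝ≥0∞) * Mbrw μ N V (i : ℕ) (j : ℕ)
      = ∑' j : ℕ+, ∫⁻ ω, ((j : ℕ) : ℝ≥0∞) *
          ENNReal.ofReal (∑ k ∈ Finset.range (N ω), t (j:ℕ) k ω) ∂μ := by
        refine tsum_congr fun j => ?_
        rw [Mbrw, lintegral_const_mul' _ _ (by simp)]
    _ = ∫⁻ ω, ∑' j : ℕ+, ((j : ℕ) : ℝ≥0∞) *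
          ENNReal.ofReal (∑ k ∈ Finset.range (N ω), t (j:ℕ) k ω) ∂μ :=
        (lintegral_tsum fun j => (hFmeas j).aemeasurable).symm
    _ = ∫⁻ ω, ((i : ℕ) : ℝ≥0∞) *
          ENNReal.ofReal (∑ k ∈ Finset.range (N ω), Real.exp (-V k ω)) ∂μ := by
        refine lintegral_congr fun ω => ?_
        calc ∑' j : ℕ+, ((j : ℕ) : ℝ≥0∞) *
              ENNReal.ofReal (∑ k ∈ Finset.range (N ω), t (j:ℕ) k ω)
            = ∑' j : ℕ+, ∑ k ∈ Finset.range (N ω),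
                ((j : ℕ) : ℝ≥0∞) * ENNReal.ofReal (t (j:ℕ) k ω) := by
              refine tsum_congr fun j => ?_
              rw [ENNReal.ofReal_sum_of_nonneg fun k _ => htnonneg _ k ω, Finset.mul_sum]
          _ = ∑ k ∈ Finset.range (N ω), ∑' j : ℕ+,
                ((j : ℕ) : ℝ≥0∞) * ENNReal.ofReal (t (j:ℕ) k ω) :=
              Summable.tsum_finsetSum fun k _ => ENNReal.summable
          _ = ∑ k ∈ Finset.range (N ω),
                ((i : ℕ) : ℝ≥0∞) * ENNReal.ofReal (Real.exp (-V k ω)) :=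
              Finset.sum_congr rfl fun k _ => keyTsum (i:ℕ) (V k ω)
          _ = ((i : ℕ) : ℝ≥0∞) *
                ENNReal.ofReal (∑ k ∈ Finset.range (N ω), Real.exp (-V k ω)) := by
              rw [ENNReal.ofReal_sum_of_nonneg fun k _ => (Real.exp_pos _).le, Finset.mul_sum]
    _ = ((i : ℕ) : ℝ≥0∞) * psiFn μ N V 1 := by
        rw [lintegral_const_mul' _ _ (by simp)]
        congr 1
        simp only [psiFn, neg_one_mul]
    _ = ((i : ℕ) : ℝ≥0∞) := by rw [hψ1, mul_one]
end

section
/- Assume ψ(1) < ∞ and ψ(2) < ∞. Then for every positive integer i, Σ_{j≥1} j^2 · M(i,j) = i·ψ(1) + i·(i+1)·ψ(2). Equivalently, for the tilted transition probabilities p(i,j) := M(i,j)·j/i, the one-step mean from state i is Σ_{j≥1} j·p(i,j) = ψ(1) + (i+1)·ψ(2). -/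
open MeasureTheory
open scoped ENNReal

private lemma choose_key (i n : ℕ) (hi : 1 ≤ i) :
    (n + 1) ^ 2 * (i + n).choose (n + 1) =
      i * (i + n).choose n + i * (i + 1) * (i + n).choose (i + 1) := by
  have h1 : (i + n).choose (n + 1) * (n + 1) = (i + n).choose n * i := by
    rw [Nat.choose_succ_right_eq]; congr 1; omega
  cases n with
  | zero =>
      simp [Nat.choose_eq_zero_of_lt (show i < i + 1 by omega)]
  | succ m =>
      have h2 : (i + (m + 1)).choose (m + 1) * (m + 1) = (i + (m + 1)).choose m * (i + 1) := by
        rw [Nat.choose_succ_right_eq]; congr 1; omega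
      have h3 : (i + (m + 1)).choose (i + 1) = (i + (m + 1)).choose m := by
        rw [← Nat.choose_symm (show i + 1 ≤ i + (m + 1) by omega)]; congr 1; omega
      rw [h3]
      zify at h1 h2 ⊢
      linear_combination ((m : ℤ) + 2) * h1 + (i : ℤ) * h2

private lemma hasSum_key (i : ℕ) (hi : 1 ≤ i) {x : ℝ} (hx : 0 < x) :
    HasSum (fun n : ℕ => ((n : ℝ) + 1) ^ 2 * ((i + n).choose (n + 1) : ℝ) * x ^ (n + 1) /
        (1 + x) ^ (i + n + 1))
      (i * x + i * (i + 1) * x ^ 2) := by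
  have hx1 : (0 : ℝ) < 1 + x := by linarith
  set s : ℝ := x / (1 + x) with hs
  have hs0 : 0 ≤ s := by positivity
  have hs1 : s < 1 := by rw [hs, div_lt_one hx1]; linarith
  have hsn : ‖s‖ < 1 := by rwa [Real.norm_eq_abs, abs_of_nonneg hs0]
  have h1s : 1 - s = 1 / (1 + x) := by
    rw [hs]; field_simp; ring
  set A : ℕ → ℝ := fun n => (i : ℝ) * ((i + n).choose n : ℝ) * x ^ (n + 1) / (1 + x) ^ (i + n + 1)
    with hA_def
  set B : ℕ → ℝ := fun n => (i : ℝ) * ((i : ℝ) + 1) * ((i + n).choose (i + 1) : ℝ) * x ^ (n + 1) /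
      (1 + x) ^ (i + n + 1) with hB_def
  have hA : HasSum A ((i : ℝ) * x) := by
    have h := (hasSum_choose_mul_geometric_of_norm_lt_one i hsn).mul_left
      ((i : ℝ) * (x / (1 + x) ^ (i + 1)))
    have heq : (fun n : ℕ => (i : ℝ) * (x / (1 + x) ^ (i + 1)) * (((n + i).choose i : ℝ) * s ^ n))
        = A := by
      funext n
      have hc : (n + i).choose i = (i + n).choose n := by
        rw [Nat.add_comm n i, ← Nat.choose_symm (Nat.le_add_right i n)]
        congr 1; omega
      rw [hc, hA_def]
      simp only [hs, div_pow]
      field_simp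
      ring
    rw [heq] at h
    have hval : (i : ℝ) * (x / (1 + x) ^ (i + 1)) * (1 / (1 - s) ^ (i + 1)) = (i : ℝ) * x := by
      rw [h1s, div_pow, one_pow, one_div_one_div]
      field_simp
    rwa [hval] at h
  have hB : HasSum B ((i : ℝ) * ((i : ℝ) + 1) * x ^ 2) := by
    have h := (hasSum_choose_mul_geometric_of_norm_lt_one (i + 1) hsn).mul_left
      ((i : ℝ) * ((i : ℝ) + 1) * (x ^ 2 / (1 + x) ^ (i + 2)))
    have heq : (fun n : ℕ => (i : ℝ) * ((i : ℝ) + 1) * (x ^ 2 / (1 + x) ^ (i + 2)) *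
        (((n + (i + 1)).choose (i + 1) : ℝ) * s ^ n)) = fun n => B (n + 1) := by
      funext n
      have hc : n + (i + 1) = i + (n + 1) := by omega
      rw [hc, hB_def]
      simp only [hs, div_pow]
      field_simp
      ring
    rw [heq] at h
    have hval : (i : ℝ) * ((i : ℝ) + 1) * (x ^ 2 / (1 + x) ^ (i + 2)) * (1 / (1 - s) ^ (i + 1 + 1))
        = (i : ℝ) * ((i : ℝ) + 1) * x ^ 2 := by
      rw [h1s, div_pow, one_pow, one_div_one_div, show i + 1 + 1 = i + 2 by ring]
      field_simp
    rw [hval] at h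
    have h2 := (hasSum_nat_add_iff (f := B) 1).mp h
    simpa [hB_def, Nat.choose_eq_zero_of_lt (show i < i + 1 by omega)] using h2
  have hsum := hA.add hB
  have heq : (fun n : ℕ => A n + B n) = fun n : ℕ =>
      ((n : ℝ) + 1) ^ 2 * ((i + n).choose (n + 1) : ℝ) * x ^ (n + 1) / (1 + x) ^ (i + n + 1) := by
    funext n
    have hkey : ((n : ℝ) + 1) ^ 2 * ((i + n).choose (n + 1) : ℝ) =
        (i : ℝ) * ((i + n).choose n : ℝ) +
          (i : ℝ) * ((i : ℝ) + 1) * ((i + n).choose (i + 1) : ℝ) := by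
      exact_mod_cast choose_key i n hi
    rw [hA_def, hB_def]
    simp only
    rw [← add_div]
    congr 1
    linear_combination (-(x ^ (n + 1))) * hkey
  rw [heq] at hsum
  exact hsum

private lemma tsum_key (i : ℕ) (hi : 1 ≤ i) (v : ℝ) :
    (∑' n : ℕ, (((n + 1 : ℕ)) : ℝ≥0∞) ^ 2 * ENNReal.ofReal
        (((i + (n + 1) - 1).choose (n + 1) : ℝ) * Real.exp (-((n + 1 : ℕ) : ℝ) * v) /
          (1 + Real.exp (-v)) ^ (i + (n + 1))))
      = (i : ℝ≥0∞) * ENNReal.ofReal (Real.exp (-1 * v)) +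
        (i : ℝ≥0∞) * ((i : ℝ≥0∞) + 1) * ENNReal.ofReal (Real.exp (-2 * v)) := by
  set x := Real.exp (-v) with hxdef
  have hx : 0 < x := Real.exp_pos _
  have hs := hasSum_key i hi hx
  have hterm : ∀ n : ℕ, (((n + 1 : ℕ)) : ℝ≥0∞) ^ 2 * ENNReal.ofReal
      (((i + (n + 1) - 1).choose (n + 1) : ℝ) * Real.exp (-((n + 1 : ℕ) : ℝ) * v) /
        (1 + Real.exp (-v)) ^ (i + (n + 1)))
      = ENNReal.ofReal (((n : ℝ) + 1) ^ 2 * ((i + n).choose (n + 1) : ℝ) * x ^ (n + 1) /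
          (1 + x) ^ (i + n + 1)) := by
    intro n
    have h1 : i + (n + 1) - 1 = i + n := by omega
    have h2 : Real.exp (-((n + 1 : ℕ) : ℝ) * v) = x ^ (n + 1) := by
      rw [hxdef, ← Real.exp_nat_mul]
      congr 1
      push_cast
      ring
    have h3 : i + (n + 1) = i + n + 1 := by omega
    rw [h1, h2, h3]
    have h4 : (((n + 1 : ℕ)) : ℝ≥0∞) ^ 2 = ENNReal.ofReal (((n : ℝ) + 1) ^ 2) := by
      rw [ENNReal.ofReal_pow (by positivity)]
      congr 1
      rw [show (n : ℝ) + 1 = ((n + 1 : ℕ) : ℝ) by push_cast; ring, ENNReal.ofReal_natCast]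
    rw [h4, ← ENNReal.ofReal_mul (by positivity)]
    congr 1
    ring
  rw [tsum_congr hterm, ← ENNReal.ofReal_tsum_of_nonneg (fun n => by positivity) hs.summable,
    hs.tsum_eq]
  have e1 : Real.exp (-1 * v) = x := by rw [hxdef]; congr 1; ring
  have e2 : Real.exp (-2 * v) = x ^ 2 := by
    rw [hxdef, ← Real.exp_nat_mul]
    congr 1
    push_cast
    ring
  rw [e1, e2, ENNReal.ofReal_add (by positivity) (by positivity)]
  congr 1
  · rw [ENNReal.ofReal_mul (by positivity), ENNReal.ofReal_natCast]
  · rw [show (i : ℝ) * ((i : ℝ) + 1) * x ^ 2 = ((i : ℝ) * ((i : ℝ) + 1)) * x ^ 2 by ring,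
      ENNReal.ofReal_mul (by positivity), ENNReal.ofReal_mul (by positivity),
      ENNReal.ofReal_add (by positivity) (by positivity)]
    simp [ENNReal.ofReal_natCast]

private lemma meas_ofReal_rangesum {Ω : Type*} [MeasurableSpace Ω] {N : Ω → ℕ}
    (hN : Measurable N) {f : ℕ → Ω → ℝ} (hf : ∀ k, Measurable (f k))
    (h0 : ∀ k ω, 0 ≤ f k ω) :
    Measurable fun ω => ENNReal.ofReal (∑ k ∈ Finset.range (N ω), f k ω) := by
  have heq : (fun ω => ENNReal.ofReal (∑ k ∈ Finset.range (N ω), f k ω)) =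
      fun ω => ∑' k : ℕ, Set.indicator (N ⁻¹' Set.Ioi k)
        (fun ω' => ENNReal.ofReal (f k ω')) ω := by
    funext ω
    rw [ENNReal.ofReal_sum_of_nonneg (fun k _ => h0 k ω)]
    rw [tsum_eq_sum (s := Finset.range (N ω))
      (fun k hk => Set.indicator_of_notMem (by
        simp only [Set.mem_preimage, Set.mem_Ioi, Finset.mem_range] at hk ⊢; omega) _)]
    exact Finset.sum_congr rfl fun k hk => (Set.indicator_of_mem
      (show ω ∈ N ⁻¹' Set.Ioi k by simpa using Finset.mem_range.mp hk)
      fun ω' => ENNReal.ofReal (f k ω')).symm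
  rw [heq]
  exact Measurable.ennreal_tsum fun k => ((hf k).ennreal_ofReal).indicator (hN measurableSet_Ioi)


/-- if `ψ(1) < ∞` and `ψ(2) < ∞`, then for every positive integer `i`,
`Σ_{j≥1} j²·M(i,j) = i·ψ(1) + i·(i+1)·ψ(2)`; equivalently, for the tilted transition
probabilities `p(i,j) = M(i,j)·j/i`, the one-step mean from state `i` is
`Σ_{j≥1} j·p(i,j) = ψ(1) + (i+1)·ψ(2)`. -/
theorem brw_one_step_mean {Ω : Type*} [MeasurableSpace Ω] (μ : Measure Ω)
    [IsProbabilityMeasure μ] (N : Ω → ℕ) (V : ℕ → Ω → ℝ)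
    (hN : Measurable N) (hV : ∀ k, Measurable (V k))
    (hψ1 : psiFn μ N V 1 < ∞) (hψ2 : psiFn μ N V 2 < ∞) :
    ∀ i : ℕ+,
      (∑' j : ℕ+, ((j : ℕ) : ℝ≥0∞) ^ 2 * Mbrw μ N V (i : ℕ) (j : ℕ) =
        ((i : ℕ) : ℝ≥0∞) * psiFn μ N V 1 +
          ((i : ℕ) : ℝ≥0∞) * (((i : ℕ) : ℝ≥0∞) + 1) * psiFn μ N V 2) ∧
      (∑' j : ℕ+, ((j : ℕ) : ℝ≥0∞) *
          (Mbrw μ N V (i : ℕ) (j : ℕ) * ((j : ℕ) : ℝ≥0∞) / ((i : ℕ) : ℝ≥0∞)) =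
        psiFn μ N V 1 + (((i : ℕ) : ℝ≥0∞) + 1) * psiFn μ N V 2) := by
  intro i
  set m : ℕ := (i : ℕ) with hm_def
  have hm : 1 ≤ m := i.property
  have hm0 : (m : ℝ≥0∞) ≠ 0 := Nat.cast_ne_zero.mpr (by omega)
  have hmtop : (m : ℝ≥0∞) ≠ ∞ := ENNReal.natCast_ne_top m
  set f : ℕ → ℕ → Ω → ℝ := fun j k ω =>
    ((m + j - 1).choose j : ℝ) * Real.exp (-(j : ℝ) * V k ω) /
      (1 + Real.exp (-V k ω)) ^ (m + j) with hf_def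
  have hf_meas : ∀ j k, Measurable (f j k) := fun j k =>
    (measurable_const.mul (((hV k).const_mul _).exp)).div
      ((measurable_const.add (hV k).neg.exp).pow_const _)
  have hf_nonneg : ∀ j k ω, 0 ≤ f j k ω := by
    intro j k ω
    rw [hf_def]
    positivity
  have hg_meas : ∀ j, Measurable fun ω =>
      ENNReal.ofReal (∑ k ∈ Finset.range (N ω), f j k ω) := fun j =>
    meas_ofReal_rangesum hN (hf_meas j) (hf_nonneg j)
  have hA_meas : Measurable fun ω =>
      ENNReal.ofReal (∑ k ∈ Finset.range (N ω), Real.exp (-1 * V k ω)) :=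
    meas_ofReal_rangesum hN (fun k => ((hV k).const_mul (-1)).exp)
      (fun k ω => (Real.exp_pos _).le)
  have hB_meas : Measurable fun ω =>
      ENNReal.ofReal (∑ k ∈ Finset.range (N ω), Real.exp (-2 * V k ω)) :=
    meas_ofReal_rangesum hN (fun k => ((hV k).const_mul (-2)).exp)
      (fun k ω => (Real.exp_pos _).le)
  have hMbrw : ∀ j, Mbrw μ N V m j =
      ∫⁻ ω, ENNReal.ofReal (∑ k ∈ Finset.range (N ω), f j k ω) ∂μ := fun j => rfl
  have key : (∑' j : ℕ+, ((j : ℕ) : ℝ≥0∞) ^ 2 * Mbrw μ N V m (j : ℕ)) =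
      (m : ℝ≥0∞) * psiFn μ N V 1 + (m : ℝ≥0∞) * ((m : ℝ≥0∞) + 1) * psiFn μ N V 2 := by
    have hpe : (∑' j : ℕ+, ((j : ℕ) : ℝ≥0∞) ^ 2 * Mbrw μ N V m (j : ℕ)) =
        ∑' n : ℕ, (((n + 1 : ℕ)) : ℝ≥0∞) ^ 2 * Mbrw μ N V m (n + 1) := by
      rw [← Equiv.pnatEquivNat.symm.tsum_eq
        (fun j : ℕ+ => ((j : ℕ) : ℝ≥0∞) ^ 2 * Mbrw μ N V m (j : ℕ))]
      apply tsum_congr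
      intro n
      congr 1
    rw [hpe]
    have hstep : ∀ n : ℕ, (((n + 1 : ℕ)) : ℝ≥0∞) ^ 2 * Mbrw μ N V m (n + 1)
        = ∫⁻ ω, (((n + 1 : ℕ)) : ℝ≥0∞) ^ 2 *
            ENNReal.ofReal (∑ k ∈ Finset.range (N ω), f (n + 1) k ω) ∂μ := by
      intro n
      rw [hMbrw, lintegral_const_mul _ (hg_meas (n + 1))]
    rw [tsum_congr hstep, ← lintegral_tsum (fun n => ((hg_meas (n + 1)).const_mul _).aemeasurable)]
    have hpoint : ∀ ω, (∑' n : ℕ, (((n + 1 : ℕ)) : ℝ≥0∞) ^ 2 *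
        ENNReal.ofReal (∑ k ∈ Finset.range (N ω), f (n + 1) k ω))
        = (m : ℝ≥0∞) * ENNReal.ofReal (∑ k ∈ Finset.range (N ω), Real.exp (-1 * V k ω)) +
          (m : ℝ≥0∞) * ((m : ℝ≥0∞) + 1) *
            ENNReal.ofReal (∑ k ∈ Finset.range (N ω), Real.exp (-2 * V k ω)) := by
      intro ω
      have h1 : ∀ n : ℕ, (((n + 1 : ℕ)) : ℝ≥0∞) ^ 2 *
          ENNReal.ofReal (∑ k ∈ Finset.range (N ω), f (n + 1) k ω)
          = ∑ k ∈ Finset.range (N ω),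
              (((n + 1 : ℕ)) : ℝ≥0∞) ^ 2 * ENNReal.ofReal (f (n + 1) k ω) := by
        intro n
        rw [ENNReal.ofReal_sum_of_nonneg (fun k _ => hf_nonneg _ k ω), Finset.mul_sum]
      rw [tsum_congr h1, Summable.tsum_finsetSum (fun k _ => ENNReal.summable)]
      have h2 : ∀ k ∈ Finset.range (N ω),
          (∑' n : ℕ, (((n + 1 : ℕ)) : ℝ≥0∞) ^ 2 * ENNReal.ofReal (f (n + 1) k ω))
          = (m : ℝ≥0∞) * ENNReal.ofReal (Real.exp (-1 * V k ω)) +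
            (m : ℝ≥0∞) * ((m : ℝ≥0∞) + 1) * ENNReal.ofReal (Real.exp (-2 * V k ω)) :=
        fun k _ => tsum_key m hm (V k ω)
      rw [Finset.sum_congr rfl h2, Finset.sum_add_distrib, ← Finset.mul_sum, ← Finset.mul_sum,
        ← ENNReal.ofReal_sum_of_nonneg (fun k _ => (Real.exp_pos _).le),
        ← ENNReal.ofReal_sum_of_nonneg (fun k _ => (Real.exp_pos _).le)]
    rw [lintegral_congr hpoint, lintegral_add_left (hA_meas.const_mul _),
      lintegral_const_mul _ hA_meas, lintegral_const_mul _ hB_meas]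
    rfl
  refine ⟨key, ?_⟩
  have h2 : ∀ j : ℕ+, ((j : ℕ) : ℝ≥0∞) *
      (Mbrw μ N V m (j : ℕ) * ((j : ℕ) : ℝ≥0∞) / (m : ℝ≥0∞))
      = (((j : ℕ) : ℝ≥0∞) ^ 2 * Mbrw μ N V m (j : ℕ)) * ((m : ℝ≥0∞))⁻¹ := by
    intro j
    rw [div_eq_mul_inv]
    ring
  rw [tsum_congr h2, ENNReal.tsum_mul_right, key, add_mul]
  have hc : ∀ a : ℝ≥0∞, (m : ℝ≥0∞) * a * ((m : ℝ≥0∞))⁻¹ = a := fun a => by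
    rw [mul_comm ((m : ℝ≥0∞)) a, mul_assoc, ENNReal.mul_inv_cancel hm0 hmtop, mul_one]
  have e2 : (m : ℝ≥0∞) * ((m : ℝ≥0∞) + 1) * psiFn μ N V 2 * ((m : ℝ≥0∞))⁻¹
      = ((m : ℝ≥0∞) + 1) * psiFn μ N V 2 := by
    rw [mul_assoc ((m : ℝ≥0∞)) _ (psiFn μ N V 2)]
    exact hc _
  rw [hc (psiFn μ N V 1), e2]
end
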